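/- For every client set C ⊆ V and every finite collection 𝔅 of pairs (j,r) with j ∈ F, r ∈ ℤ, f_j ≤ 5^r ≤ 5·W, whose closed balls B(j,5^r) cover C, there exists a finite subset S ⊆ Π such that C ⊆ ⋃_{(j,r) ∈ S} A(j,r) and Σ_{(j,r) ∈ S} (f_j + 7·5^r) ≤ 8·2^{2κ} · Σ_{(j,r) ∈ 𝔅} (f_j + 5^r). -/

import Mathlib

/-- Lemma `Areas-suffice`: every client set coverable by a
finite collection `𝔅` of balls `B(j,5^r)` (with `j ∈ F`, `f j ≤ 5^r ≤ 5W`)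
can be covered by a finite subcollection `S ⊆ Π` of areas, of total cost
`Σ_{(j,r)∈S} (f j + 7·5^r) ≤ 8·2^(2κ)·Σ_{(j,r)∈𝔅} (f j + 5^r)`. -/

private lemma sum_biUnion_le_aux {α β : Type*} [DecidableEq α] [DecidableEq β] (g : β → ℝ) :
    ∀ s : Finset α, ∀ t : α → Finset β, (∀ x ∈ s.biUnion t, 0 ≤ g x) →
    ∑ x ∈ s.biUnion t, g x ≤ ∑ a ∈ s, ∑ x ∈ t a, g x := by
  intro s
  induction s using Finset.induction_on with
  | empty => simp
  | insert a s ha ih =>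
    intro t hnn
    rw [Finset.biUnion_insert] at hnn ⊢
    rw [Finset.sum_insert ha]
    have h1 : ∑ x ∈ t a ∪ s.biUnion t, g x + ∑ x ∈ (t a) ∩ (s.biUnion t), g x
        = ∑ x ∈ t a, g x + ∑ x ∈ s.biUnion t, g x := Finset.sum_union_inter
    have h2 : 0 ≤ ∑ x ∈ (t a) ∩ (s.biUnion t), g x :=
      Finset.sum_nonneg fun x hx => hnn x (Finset.mem_union_right _ (Finset.mem_of_mem_inter_right hx))
    have h3 := ih t (fun x hx => hnn x (Finset.mem_union_right _ hx))
    linarith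

theorem stmt_5 {V : Type*} [MetricSpace V] (κ : ℕ)
    (hdoub : ∀ (x : V) (R : ℝ), 0 < R → ∃ T : Finset V, T.card ≤ 2 ^ κ ∧
      Metric.closedBall x R ⊆ ⋃ y ∈ T, Metric.closedBall y (R / 2))
    (W : ℝ) (hW : 0 < W) (hdiam : ∀ x y : V, dist x y ≤ W)
    (F : Finset V) (f : V → ℝ) (hf : ∀ j ∈ F, 0 < f j)
    (P : Finset (V × ℤ))
    (hPmem : ∀ u ∈ P, u.1 ∈ F ∧ f u.1 ≤ 5 ^ u.2)
    (hPcover : ∀ j ∈ F, ∀ r : ℤ, f j ≤ 5 ^ r → (5 : ℝ) ^ r ≤ 5 * W →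
      ∃ j' : V, (j', r) ∈ P ∧ dist j j' ≤ 5 ^ (r + 1))
    (hPsep : ∀ (j j' : V) (r : ℤ), (j, r) ∈ P → (j', r) ∈ P → j ≠ j' →
      dist j j' > 5 ^ (r + 1))
    (A : V × ℤ → Set V)
    (hA : ∀ u ∈ P, A u ⊆ Metric.closedBall u.1 (7 * 5 ^ u.2))
    (hAcomplete : ∀ (r : ℤ) (p : V),
      (∃ j : V, (j, r) ∈ P ∧ p ∈ Metric.closedBall j (7 * 5 ^ r)) →
      ∃ j'' : V, (j'', r) ∈ P ∧ p ∈ A (j'', r))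
    (C : Set V) (𝔅 : Finset (V × ℤ))
    (h𝔅 : ∀ b ∈ 𝔅, b.1 ∈ F ∧ f b.1 ≤ 5 ^ b.2 ∧ (5 : ℝ) ^ b.2 ≤ 5 * W)
    (hcov : C ⊆ ⋃ b ∈ 𝔅, Metric.closedBall b.1 ((5 : ℝ) ^ b.2)) :
    ∃ S : Finset (V × ℤ), S ⊆ P ∧ (C ⊆ ⋃ u ∈ S, A u) ∧
      ∑ u ∈ S, (f u.1 + 7 * 5 ^ u.2) ≤
        8 * 2 ^ (2 * κ) * ∑ b ∈ 𝔅, (f b.1 + 5 ^ b.2) := by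
  classical
  have pos5 : ∀ r : ℤ, (0:ℝ) < 5 ^ r := fun r => zpow_pos (by norm_num) r
  -- doubling applied twice
  have doub2 : ∀ (x : V) (R : ℝ), 0 < R → ∃ T : Finset V, T.card ≤ 2 ^ (2*κ) ∧
      Metric.closedBall x R ⊆ ⋃ y ∈ T, Metric.closedBall y (R / 4) := by
    intro x R hR
    obtain ⟨T1, hT1c, hT1⟩ := hdoub x R hR
    choose T2 hT2c hT2 using fun y => hdoub y (R/2) (by linarith)
    refine ⟨T1.biUnion T2, ?_, ?_⟩
    · calc (T1.biUnion T2).card ≤ ∑ y ∈ T1, (T2 y).card := Finset.card_biUnion_le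
        _ ≤ ∑ _y ∈ T1, 2^κ := Finset.sum_le_sum fun y _ => hT2c y
        _ = T1.card * 2^κ := by rw [Finset.sum_const, smul_eq_mul]
        _ ≤ 2^κ * 2^κ := Nat.mul_le_mul_right _ hT1c
        _ = 2^(2*κ) := by rw [two_mul, pow_add]
    · intro p hp
      obtain ⟨y, hy, hpy⟩ := Set.mem_iUnion₂.1 (hT1 hp)
      obtain ⟨z, hz, hpz⟩ := Set.mem_iUnion₂.1 (hT2 y hpy)
      refine Set.mem_iUnion₂.2 ⟨z, Finset.mem_biUnion.2 ⟨y, hy, hz⟩, ?_⟩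
      have h4 : R / 2 / 2 = R / 4 := by ring
      rwa [h4] at hpz
  set Sb : V × ℤ → Finset (V × ℤ) := fun b =>
    P.filter (fun u => u.2 = b.2 ∧ dist b.1 u.1 ≤ 8 * 5 ^ b.2) with hSbdef
  have hSbP : ∀ b, Sb b ⊆ P := fun b => Finset.filter_subset _ _
  refine ⟨𝔅.biUnion Sb, ?_, ?_, ?_⟩
  · intro u hu
    obtain ⟨b, _, hub⟩ := Finset.mem_biUnion.1 hu
    exact hSbP b hub
  · -- coverage
    intro p hp
    obtain ⟨b, hb, hpb⟩ := Set.mem_iUnion₂.1 (hcov hp)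
    obtain ⟨hbF, hbf, hbW⟩ := h𝔅 b hb
    obtain ⟨j', hj'P, hj'd⟩ := hPcover b.1 hbF b.2 hbf hbW
    rw [Metric.mem_closedBall] at hpb
    have h51 : (5:ℝ) ^ (b.2 + 1) = 5 * 5 ^ b.2 := by
      rw [zpow_add_one₀ (by norm_num : (5:ℝ) ≠ 0)]; ring
    have hpj' : p ∈ Metric.closedBall j' (7 * 5 ^ b.2) := by
      rw [Metric.mem_closedBall]
      have := dist_triangle p b.1 j'
      rw [h51] at hj'd
      have := pos5 b.2
      linarith
    obtain ⟨j'', hj''P, hpA⟩ := hAcomplete b.2 p ⟨j', hj'P, hpj'⟩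
    have hd : dist p j'' ≤ 7 * 5 ^ b.2 := hA (j'', b.2) hj''P hpA
    refine Set.mem_iUnion₂.2 ⟨(j'', b.2), ?_, hpA⟩
    refine Finset.mem_biUnion.2 ⟨b, hb, Finset.mem_filter.2 ⟨hj''P, rfl, ?_⟩⟩
    have := dist_triangle b.1 p j''
    rw [dist_comm b.1 p] at this
    simp only
    linarith
  · -- cost
    have hterm_nonneg : ∀ u ∈ P, (0:ℝ) ≤ f u.1 + 7 * 5 ^ u.2 := by
      intro u hu
      have := hf u.1 (hPmem u hu).1
      have := pos5 u.2
      linarith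
    have hcard : ∀ b ∈ 𝔅, (Sb b).card ≤ 2 ^ (2*κ) := by
      intro b hb
      obtain ⟨T, hTc, hT⟩ := doub2 b.1 (8 * 5 ^ b.2) (by have := pos5 b.2; linarith)
      have hpick : ∀ u ∈ Sb b, ∃ z ∈ T, dist u.1 z ≤ 2 * 5 ^ b.2 := by
        intro u hu
        obtain ⟨huP, hur, hud⟩ := Finset.mem_filter.1 hu
        have hmem : u.1 ∈ Metric.closedBall b.1 (8 * 5 ^ b.2) := by
          rw [Metric.mem_closedBall, dist_comm]; exact hud
        obtain ⟨z, hz, hzd⟩ := Set.mem_iUnion₂.1 (hT hmem)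
        rw [Metric.mem_closedBall] at hzd
        exact ⟨z, hz, by linarith⟩
      set g : V × ℤ → V := fun u => if h : u ∈ Sb b then (hpick u h).choose else b.1 with hg
      have hgT : ∀ u ∈ Sb b, g u ∈ T := by
        intro u hu; simp only [hg, dif_pos hu]; exact (hpick u hu).choose_spec.1
      have hgd : ∀ u ∈ Sb b, dist u.1 (g u) ≤ 2 * 5 ^ b.2 := by
        intro u hu; simp only [hg, dif_pos hu]; exact (hpick u hu).choose_spec.2
      refine le_trans (Finset.card_le_card_of_injOn g hgT ?_) hTc
      intro u hu u' hu' hgeq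
      simp only [Finset.coe_mem, Finset.mem_coe] at hu hu'
      obtain ⟨huP, hur, _⟩ := Finset.mem_filter.1 hu
      obtain ⟨hu'P, hu'r, _⟩ := Finset.mem_filter.1 hu'
      have hdist : dist u.1 u'.1 ≤ 4 * 5 ^ b.2 := by
        have h1 := hgd u hu
        have h2 := hgd u' hu'
        have := dist_triangle u.1 (g u) u'.1
        rw [hgeq, dist_comm (g u') u'.1] at this
        rw [hgeq] at h1
        linarith
      have heq1 : u.1 = u'.1 := by
        by_contra hne
        have huP' : (u.1, b.2) ∈ P := by rw [← hur]; exact huP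
        have hu'P' : (u'.1, b.2) ∈ P := by rw [← hu'r]; exact hu'P
        have := hPsep u.1 u'.1 b.2 huP' hu'P' hne
        have h51 : (5:ℝ) ^ (b.2 + 1) = 5 * 5 ^ b.2 := by
          rw [zpow_add_one₀ (by norm_num : (5:ℝ) ≠ 0)]; ring
        rw [h51] at this
        have := pos5 b.2
        linarith
      exact Prod.ext heq1 (hur.trans hu'r.symm)
    have hsum_b : ∀ b ∈ 𝔅, ∑ u ∈ Sb b, (f u.1 + 7 * 5 ^ u.2) ≤
        8 * 2 ^ (2*κ) * (f b.1 + 5 ^ b.2) := by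
      intro b hb
      obtain ⟨hbF, hbf, _⟩ := h𝔅 b hb
      have step1 : ∑ u ∈ Sb b, (f u.1 + 7 * 5 ^ u.2) ≤ ∑ _u ∈ Sb b, 8 * 5 ^ b.2 := by
        refine Finset.sum_le_sum fun u hu => ?_
        obtain ⟨huP, hur, _⟩ := Finset.mem_filter.1 hu
        have := (hPmem u (hSbP b hu)).2
        rw [hur] at this ⊢
        linarith
      have step2 : ∑ _u ∈ Sb b, (8:ℝ) * 5 ^ b.2 = (Sb b).card * (8 * 5 ^ b.2) := by
        rw [Finset.sum_const, nsmul_eq_mul]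
      have step3 : ((Sb b).card : ℝ) * (8 * 5 ^ b.2) ≤ (2^(2*κ) : ℝ) * (8 * 5 ^ b.2) := by
        have := pos5 b.2
        have hc : ((Sb b).card : ℝ) ≤ (2^(2*κ) : ℝ) := by
          exact_mod_cast hcard b hb
        nlinarith
      have hfb := hf b.1 hbF
      have := pos5 b.2
      calc ∑ u ∈ Sb b, (f u.1 + 7 * 5 ^ u.2) ≤ (Sb b).card * (8 * 5 ^ b.2) := by
            rw [← step2]; exact step1
        _ ≤ (2^(2*κ) : ℝ) * (8 * 5 ^ b.2) := step3
        _ ≤ 8 * 2 ^ (2*κ) * (f b.1 + 5 ^ b.2) := by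
            have h2 : (0:ℝ) < 2^(2*κ) := by positivity
            nlinarith
    -- sum over biUnion ≤ sum of sums
    have hbiU : ∑ u ∈ 𝔅.biUnion Sb, (f u.1 + 7 * 5 ^ u.2) ≤
        ∑ b ∈ 𝔅, ∑ u ∈ Sb b, (f u.1 + 7 * 5 ^ u.2) := by
      refine sum_biUnion_le_aux _ 𝔅 Sb fun u hu => ?_
      refine hterm_nonneg u ?_
      obtain ⟨b, _, hub⟩ := Finset.mem_biUnion.1 hu
      exact hSbP b hub
    calc ∑ u ∈ 𝔅.biUnion Sb, (f u.1 + 7 * 5 ^ u.2)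
        ≤ ∑ b ∈ 𝔅, ∑ u ∈ Sb b, (f u.1 + 7 * 5 ^ u.2) := hbiU
      _ ≤ ∑ b ∈ 𝔅, 8 * 2 ^ (2*κ) * (f b.1 + 5 ^ b.2) := Finset.sum_le_sum hsum_b
      _ = 8 * 2 ^ (2 * κ) * ∑ b ∈ 𝔅, (f b.1 + 5 ^ b.2) := by rw [Finset.mul_sum]
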